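/- Let K = v + ℝ_{≥0}w_1 + ⋯ + ℝ_{≥0}w_d be a simple rational cone in ℝ^d with fundamental parallelepiped P_K. Then (∏_{i=1}^d (1 − x^{w_i})) · S_K = S_{P_K} as formal Laurent series; explicitly, for every m ∈ ℤ^d, Σ_{T ⊆ {1,…,d}} (−1)^{|T|} · 1_{K∩ℤ^d}(m − Σ_{i∈T} w_i) = 1_{P_K∩ℤ^d}(m). -/

import Mathlib

open scoped BigOperators Classical

noncomputable section

/-- The real vector corresponding to an integer vector. -/
def toR (d : ℕ) (m : Fin d → ℤ) : Fin d → ℝ := fun i => (m i : ℝ)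

/-- The standard dot product on `ℝ^d`. -/
def dotR (d : ℕ) (x y : Fin d → ℝ) : ℝ := ∑ i, x i * y i

/-- Laurent polynomials `ℂ[x₁^{±1},…,x_d^{±1}]`, represented by their coefficient functions. -/
abbrev LaurentPoly (d : ℕ) := (Fin d → ℤ) →₀ ℂ

/-- The integer-point generating series of a subset of `ℝ^d`: the function `ℤ^d → ℂ`
equal to `1` on `S ∩ ℤ^d` and `0` elsewhere. -/
def genSeries (d : ℕ) (S : Set (Fin d → ℝ)) : (Fin d → ℤ) → ℂ :=
  fun m => if toR d m ∈ S then 1 else 0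

/-- The action of a Laurent polynomial on a formal Laurent series,
`(x^w · S)(m) = S(m - w)` extended linearly. -/
def actLP (d : ℕ) (g : LaurentPoly d) (S : (Fin d → ℤ) → ℂ) : (Fin d → ℤ) → ℂ :=
  fun m => ∑ w ∈ g.support, g w * S (m - w)

/-- The series of a Laurent polynomial `f`, i.e. `Σ_m f_m x^m` as a formal series. -/
def seriesOf (d : ℕ) (f : LaurentPoly d) : (Fin d → ℤ) → ℂ := fun m => f m

/-- The cone `v + ℝ_{≥0} w₁ + ⋯ + ℝ_{≥0} w_n`. -/
def coneSet (d n : ℕ) (v : Fin d → ℝ) (w : Fin n → Fin d → ℤ) : Set (Fin d → ℝ) :=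
  {y | ∃ lam : Fin n → ℝ, (∀ i, 0 ≤ lam i) ∧ y = v + ∑ i, lam i • toR d (w i)}

/-- The fundamental half-open parallelepiped `{v + Σ λᵢ wᵢ : 0 ≤ λᵢ < 1}`. -/
def parSet (d : ℕ) (v : Fin d → ℝ) (w : Fin d → Fin d → ℤ) : Set (Fin d → ℝ) :=
  {y | ∃ lam : Fin d → ℝ, (∀ i, 0 ≤ lam i ∧ lam i < 1) ∧ y = v + ∑ i, lam i • toR d (w i)}

/-- A simple rational cone: `v + ℝ_{≥0} w₁ + ⋯ + ℝ_{≥0} w_d` with `w₁,…,w_d ∈ ℤ^d`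
linearly independent. -/
def IsSimpleCone (d : ℕ) (K : Set (Fin d → ℝ)) : Prop :=
  ∃ (v : Fin d → ℝ) (w : Fin d → Fin d → ℤ),
    LinearIndependent ℝ (fun i => toR d (w i)) ∧ K = coneSet d d v w

/-- Membership in the module `PL` of polyhedral Laurent series: a finite
`ℂ[x₁^{±1},…,x_d^{±1}]`-linear combination of the series of simple rational cones. -/
def MemPL (d : ℕ) (S : (Fin d → ℤ) → ℂ) : Prop :=
  ∃ (n : ℕ) (g : Fin n → LaurentPoly d) (K : Fin n → Set (Fin d → ℝ)),
    (∀ i, IsSimpleCone d (K i)) ∧ S = ∑ i, actLP d (g i) (genSeries d (K i))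

/-- The field of rational functions `ℂ(x₁,…,x_d)`. -/
abbrev RatF (d : ℕ) := FractionRing (MvPolynomial (Fin d) ℂ)

/-- The monomial `x^w`, `w ∈ ℤ^d`, as a rational function. -/
def ratMon (d : ℕ) (w : Fin d → ℤ) : RatF d :=
  ∏ i, (algebraMap (MvPolynomial (Fin d) ℂ) (RatF d) (MvPolynomial.X i)) ^ (w i)

/-- A Laurent polynomial as a rational function. -/
def toRat (d : ℕ) (g : LaurentPoly d) : RatF d :=
  ∑ w ∈ g.support, algebraMap (MvPolynomial (Fin d) ℂ) (RatF d) (MvPolynomial.C (g w)) * ratMon d w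

/-- `σ_S(x) = Σ_{m ∈ S ∩ ℤ^d} x^m`, as a rational function (for `S` with finitely many
integer points). -/
def sigmaSet (d : ℕ) (S : Set (Fin d → ℝ)) : RatF d :=
  ∑ᶠ m ∈ {m : Fin d → ℤ | toR d m ∈ S}, ratMon d m

/-- `φ : PL → ℂ(x₁,…,x_d)` is the `ℂ[x₁^{±1},…,x_d^{±1}]`-module homomorphism sending the
series `S_K` of a simple rational cone `K` to `σ_{P_K}(x) / Π (1 - x^{wᵢ})`. -/
def IsPhi (d : ℕ) (φ : ((Fin d → ℤ) → ℂ) → RatF d) : Prop :=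
  (∀ S T, MemPL d S → MemPL d T → φ (S + T) = φ S + φ T) ∧
  (∀ (g : LaurentPoly d) (S), MemPL d S → φ (actLP d g S) = toRat d g * φ S) ∧
  (∀ (v : Fin d → ℝ) (w : Fin d → Fin d → ℤ),
      LinearIndependent ℝ (fun i => toR d (w i)) →
      φ (genSeries d (coneSet d d v w)) =
        sigmaSet d (parSet d v w) / ∏ i, (1 - ratMon d (w i)))

/-- A convex polyhedron: an intersection of finitely many closed halfspaces. -/
def IsPolyhedron (d : ℕ) (P : Set (Fin d → ℝ)) : Prop :=
  ∃ (n : ℕ) (a : Fin n → Fin d → ℝ) (b : Fin n → ℝ),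
    P = {y | ∀ i, dotR d (a i) y ≤ b i}

/-- The polar `P^∨ = {x : ⟨x,y⟩ ≤ 1 for all y ∈ P}`. -/
def polar (d : ℕ) (P : Set (Fin d → ℝ)) : Set (Fin d → ℝ) :=
  {x | ∀ y ∈ P, dotR d x y ≤ 1}


/-- For a simple rational cone `K` with fundamental parallelepiped `P_K`,
`(Π (1 - x^{wᵢ})) · S_K = S_{P_K}` as formal Laurent series: for every `m ∈ ℤ^d`,
`Σ_{T ⊆ {1,…,d}} (-1)^{|T|} 1_{K∩ℤ^d}(m - Σ_{i∈T} wᵢ) = 1_{P_K∩ℤ^d}(m)`. -/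
theorem statement1 (d : ℕ) (v : Fin d → ℝ) (w : Fin d → Fin d → ℤ)
    (hw : LinearIndependent ℝ (fun i => toR d (w i))) :
    ∀ m : Fin d → ℤ,
      ∑ T : Finset (Fin d),
          (-1 : ℂ) ^ T.card * genSeries d (coneSet d d v w) (m - ∑ i ∈ T, w i) =
        genSeries d (parSet d v w) m := by
  have hcard : Fintype.card (Fin d) = Module.finrank ℝ (Fin d → ℝ) := by
    simp [Module.finrank_fintype_fun_eq_card]
  let B : Module.Basis (Fin d) ℝ (Fin d → ℝ) :=
    Module.Basis.mk hw (hw.span_eq_top_of_card_eq_finrank' hcard).ge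
  have hB : ∀ i, B i = toR d (w i) := fun i => congrFun (Module.Basis.coe_mk _ _) i
  intro m
  set μ : Fin d → ℝ := fun i => B.repr (toR d m - v) i with hμdef
  have hsum : toR d m - v = ∑ i, μ i • B i := (B.sum_repr (toR d m - v)).symm
  -- characterization of cone membership for the shifted points
  have hcone : ∀ T : Finset (Fin d),
      (toR d (m - ∑ i ∈ T, w i) ∈ coneSet d d v w ↔
        ∀ i, (if i ∈ T then (1 : ℝ) else 0) ≤ μ i) := by
    intro T
    have htr : toR d (m - ∑ i ∈ T, w i) = toR d m - ∑ j ∈ T, B j := by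
      funext k
      simp only [toR, Pi.sub_apply, Finset.sum_apply, hB]
      push_cast
      simp [toR]
    have hT : (∑ j ∈ T, B j) = ∑ i, (if i ∈ T then (1 : ℝ) else 0) • B i := by
      symm
      simp only [ite_smul, one_smul, zero_smul]
      rw [Finset.sum_ite_mem, Finset.univ_inter]
    constructor
    · rintro ⟨lam, hlam, hy⟩
      have hy' : toR d m - v = ∑ i, (lam i + if i ∈ T then 1 else 0) • B i := by
        have : toR d (m - ∑ i ∈ T, w i) = v + ∑ i, lam i • B i := by
          rw [hy]; congr 1; exact Finset.sum_congr rfl fun i _ => by rw [hB]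
        rw [htr] at this
        have : toR d m - v = (∑ i, lam i • B i) + ∑ j ∈ T, B j := by
          rw [sub_eq_iff_eq_add] at this
          rw [this]; abel
        rw [this, hT, ← Finset.sum_add_distrib]
        exact Finset.sum_congr rfl fun i _ => by rw [add_smul]
      have hrep : ∀ i, μ i = lam i + if i ∈ T then 1 else 0 := by
        intro i
        have := congrFun (B.repr_sum_self (fun i => lam i + if i ∈ T then 1 else 0)) i
        rw [hμdef]
        simp only [← hy'] at this ⊢
        exact this
      intro i
      rw [hrep i]
      by_cases hi : i ∈ T <;> simp [hi] <;> linarith [hlam i]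
    · intro h
      refine ⟨fun i => μ i - if i ∈ T then 1 else 0, fun i => sub_nonneg.2 (h i), ?_⟩
      have : (∑ i, (μ i - if i ∈ T then 1 else 0) • toR d (w i))
          = (∑ i, μ i • B i) - ∑ j ∈ T, B j := by
        rw [hT, ← Finset.sum_sub_distrib]
        exact Finset.sum_congr rfl fun i _ => by rw [hB, sub_smul]
      rw [htr, this, ← hsum]
      abel
  -- characterization of parallelepiped membership
  have hpar : toR d m ∈ parSet d v w ↔ ∀ i, 0 ≤ μ i ∧ μ i < 1 := by
    constructor
    · rintro ⟨lam, hlam, hy⟩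
      have hy' : toR d m - v = ∑ i, lam i • B i := by
        rw [hy]
        have : (∑ i, lam i • toR d (w i)) = ∑ i, lam i • B i :=
          Finset.sum_congr rfl fun i _ => by rw [hB]
        rw [this]; abel
      have hrep : ∀ i, μ i = lam i := by
        intro i
        have := congrFun (B.repr_sum_self lam) i
        rw [hμdef]
        simp only [← hy'] at this ⊢
        exact this
      intro i; rw [hrep i]; exact hlam i
    · intro h
      refine ⟨μ, h, ?_⟩
      have : (∑ i, μ i • toR d (w i)) = ∑ i, μ i • B i :=
        Finset.sum_congr rfl fun i _ => by rw [hB]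
      rw [this, ← hsum]; abel
  by_cases hneg : ∀ i, 0 ≤ μ i
  · set A : Finset (Fin d) := Finset.univ.filter (fun i => 1 ≤ μ i) with hA
    have hcond : ∀ T : Finset (Fin d),
        ((∀ i, (if i ∈ T then (1 : ℝ) else 0) ≤ μ i) ↔ T ⊆ A) := by
      intro T
      constructor
      · intro h i hiT
        have := h i
        rw [if_pos hiT] at this
        simp [hA, this]
      · intro h i
        by_cases hi : i ∈ T
        · have := h hi
          rw [hA, Finset.mem_filter] at this
          simpa [hi] using this.2
        · simpa [hi] using hneg i
    have lhs_eq : ∑ T : Finset (Fin d),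
          (-1 : ℂ) ^ T.card * genSeries d (coneSet d d v w) (m - ∑ i ∈ T, w i)
        = ∑ T ∈ A.powerset, (-1 : ℂ) ^ T.card := by
      rw [← Finset.sum_filter_add_sum_filter_not Finset.univ (fun T => T ⊆ A)]
      have h1 : ∀ T ∈ Finset.univ.filter (fun T : Finset (Fin d) => T ⊆ A),
          (-1 : ℂ) ^ T.card * genSeries d (coneSet d d v w) (m - ∑ i ∈ T, w i)
            = (-1 : ℂ) ^ T.card := by
        intro T hT
        rw [Finset.mem_filter] at hT
        rw [genSeries, if_pos ((hcone T).2 ((hcond T).2 hT.2))]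
        ring
      have h2 : ∀ T ∈ Finset.univ.filter (fun T : Finset (Fin d) => ¬ T ⊆ A),
          (-1 : ℂ) ^ T.card * genSeries d (coneSet d d v w) (m - ∑ i ∈ T, w i) = 0 := by
        intro T hT
        rw [Finset.mem_filter] at hT
        rw [genSeries, if_neg (fun hmem => hT.2 ((hcond T).1 ((hcone T).1 hmem)))]
        ring
      rw [Finset.sum_congr rfl h1, Finset.sum_congr rfl h2, Finset.sum_const, smul_zero,
        add_zero]
      congr 1
      ext T
      simp [Finset.mem_powerset]
    rw [lhs_eq]
    have hcast : (∑ T ∈ A.powerset, (-1 : ℂ) ^ T.card)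
        = ((∑ T ∈ A.powerset, (-1 : ℤ) ^ T.card : ℤ) : ℂ) := by
      push_cast
      rfl
    rw [hcast, Finset.sum_powerset_neg_one_pow_card]
    rw [genSeries]
    by_cases hAe : A = ∅
    · rw [if_pos hAe, if_pos]
      · norm_num
      · refine (hpar).2 fun i => ⟨hneg i, ?_⟩
        by_contra hlt
        have : i ∈ A := by simp [hA]; linarith
        simp [hAe] at this
    · rw [if_neg hAe, if_neg]
      · norm_num
      · intro hm
        obtain ⟨i, hi⟩ := Finset.nonempty_iff_ne_empty.2 hAe
        rw [hA, Finset.mem_filter] at hi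
        exact absurd ((hpar.1 hm) i).2 (by linarith [hi.2])
  · push_neg at hneg
    obtain ⟨i0, hi0⟩ := hneg
    have lhs0 : ∀ T : Finset (Fin d),
        (-1 : ℂ) ^ T.card * genSeries d (coneSet d d v w) (m - ∑ i ∈ T, w i) = 0 := by
      intro T
      rw [genSeries, if_neg, mul_zero]
      intro hmem
      have := (hcone T).1 hmem i0
      by_cases hi : i0 ∈ T <;> simp [hi] at this <;> linarith
    rw [Finset.sum_congr rfl (fun T _ => lhs0 T), Finset.sum_const, smul_zero, genSeries,
      if_neg]
    intro hm
    exact absurd ((hpar.1 hm) i0).1 (by linarith)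

end
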